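/- The gain function φ(x,i) = (−x_i, −π(i)) (compared lexicographically), where π : [n] → [n] is a permutation, satisfies condition (G1) for the perturbed-leximin justice criterion: for any x ∈ ℤ_{≥0}^n and indices i ≠ j, letting y = x + e_i and z = x + e_j, and defining the perturbed vector x' by x'_h = x_h + π(h)/n² (with n ≥ 2), if φ(x,i) > φ(x,j) lexicographically then sort(y') lexicographically dominates sort(z'), where y', z' are the perturbed versions of y, z. -/

import Mathlib

/-- `x` sorted in ascending order. -/
noncomputable def sortv {n : ℕ} (x : Fin n → ℝ) : Fin n → ℝ := x ∘ Tuple.sort x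

/-- `a` lexicographically dominates `b`. -/
def LexDom {n : ℕ} (a b : Fin n → ℝ) : Prop :=
  ∃ k : Fin n, (∀ j : Fin n, j < k → a j = b j) ∧ b k < a k

open Finset

/-- Uniqueness of integer + small-fraction decomposition. -/
lemma key_frac {N u v p q : ℕ} (hN : 0 < N) (hp : p < N) (hq : q < N)
    (h : (u : ℝ) + p / N = v + q / N) : u = v ∧ p = q := by
  have hN' : (N : ℝ) ≠ 0 := Nat.cast_ne_zero.mpr hN.ne'
  have h2 : (u : ℝ) * N + p = v * N + q := by
    field_simp at h; linarith
  have h3 : u * N + p = v * N + q := by exact_mod_cast h2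
  have hm := congrArg (· % N) h3
  rw [Nat.add_comm (u * N) p, Nat.add_comm (v * N) q, Nat.add_mul_mod_self_right,
    Nat.add_mul_mod_self_right, Nat.mod_eq_of_lt hp, Nat.mod_eq_of_lt hq] at hm
  subst hm
  refine ⟨Nat.eq_of_mul_eq_mul_right hN (by omega), rfl⟩

/-- Counting characterization of the sorted vector: entry `m` satisfies a
downward-closed predicate `P` iff `m` is below the number of entries satisfying `P`. -/
lemma sortv_count {n : ℕ} (v : Fin n → ℝ) (P : ℝ → Prop) [DecidablePred P]
    (hP : ∀ s t : ℝ, s ≤ t → P t → P s) (m : Fin n) :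
    P (sortv v m) ↔ (m : ℕ) < (univ.filter (fun h => P (v h))).card := by
  have hmono : Monotone (sortv v) := Tuple.monotone_sort v
  have hcard : (univ.filter (fun h => P (v h))).card
      = (univ.filter (fun m : Fin n => P (sortv v m))).card := by
    apply Finset.card_bij (fun h _ => (Tuple.sort v).symm h)
    · intro h hh
      simp only [mem_filter, mem_univ, true_and] at hh ⊢
      simpa [sortv] using hh
    · intro a _ b _ hab
      exact (Tuple.sort v).symm.injective hab
    · intro m hm
      refine ⟨Tuple.sort v m, ?_, by simp⟩
      simp only [mem_filter, mem_univ, true_and] at hm ⊢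
      simpa [sortv] using hm
  rw [hcard]
  constructor
  · intro hPm
    have hsub : Finset.Iic m ⊆ univ.filter (fun m : Fin n => P (sortv v m)) := by
      intro m' hm'
      simp only [Finset.mem_Iic] at hm'
      simp only [mem_filter, mem_univ, true_and]
      exact hP _ _ (hmono hm') hPm
    have := Finset.card_le_card hsub
    rw [Fin.card_Iic] at this
    omega
  · intro hlt
    by_contra hPm
    have hsub : univ.filter (fun m' : Fin n => P (sortv v m')) ⊆ Finset.Iio m := by
      intro m' hm'
      simp only [mem_filter, mem_univ, true_and] at hm'
      simp only [Finset.mem_Iio]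
      by_contra hge
      exact hPm (hP _ _ (hmono (not_lt.mp hge)) hm')
    have := Finset.card_le_card hsub
    rw [Fin.card_Iio] at this
    omega

theorem prioritized_lorenz_G1 {n : ℕ} (hn : 2 ≤ n) (π : Equiv.Perm (Fin n))
    (x : Fin n → ℕ) (i j : Fin n) (hij : i ≠ j)
    -- φ(x,i) = (−x_i, −π(i)) > φ(x,j) lexicographically:
    (hphi : x i < x j ∨ (x i = x j ∧ (π i : ℕ) < (π j : ℕ)))
    (y z : Fin n → ℕ)
    (hy : y = Function.update x i (x i + 1))
    (hz : z = Function.update x j (x j + 1))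
    -- perturbed versions: add π(h)/n² (with π(h) ∈ [n] encoded as (π h).val + 1)
    (y' z' : Fin n → ℝ)
    (hy' : y' = fun h => (y h : ℝ) + ((π h : ℕ) + 1) / (n ^ 2 : ℕ))
    (hz' : z' = fun h => (z h : ℝ) + ((π h : ℕ) + 1) / (n ^ 2 : ℕ)) :
    LexDom (sortv y') (sortv z') := by
  classical
  set N : ℕ := n ^ 2 with hN
  have hNpos : 0 < N := by positivity
  have hnN : n < N := by
    have h2 : n * 2 ≤ n * n := Nat.mul_le_mul_left n hn
    rw [hN, pow_two]; omega
  have hfrac : ∀ h : Fin n, (π h : ℕ) + 1 < N := fun h => by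
    have := (π h).2; omega
  -- the unperturbed perturbation x'
  set x' : Fin n → ℝ := fun h => (x h : ℝ) + ((π h : ℕ) + 1) / (N : ℕ) with hx'
  have hNne : (N : ℝ) ≠ 0 := Nat.cast_ne_zero.mpr hNpos.ne'
  have hfpos : ∀ h : Fin n, (0 : ℝ) < ((π h : ℕ) + 1) / (N : ℕ) := fun h => by
    apply div_pos <;> [positivity; exact_mod_cast hNpos]
  have hflt : ∀ h : Fin n, ((π h : ℕ) + 1 : ℝ) / (N : ℕ) < 1 := fun h => by
    rw [div_lt_one (by exact_mod_cast hNpos)]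
    exact_mod_cast hfrac h
  -- values of y', z'
  have hyv : ∀ h : Fin n, h ≠ i → y' h = x' h := by
    intro h hh
    simp [hy', hy, hx', Function.update_of_ne hh]
  have hzv : ∀ h : Fin n, h ≠ j → z' h = x' h := by
    intro h hh
    simp [hz', hz, hx', Function.update_of_ne hh]
  have hyi : y' i = x' i + 1 := by
    simp [hy', hy, hx']; push_cast; ring
  have hzj : z' j = x' j + 1 := by
    simp [hz', hz, hx']; push_cast; ring
  -- injectivity
  have hinj : ∀ w : Fin n → ℕ, Function.Injective
      (fun h => (w h : ℝ) + ((π h : ℕ) + 1) / (N : ℕ)) := by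
    intro w a b hab
    simp only at hab
    have hab2 : ((w a : ℕ) : ℝ) + (((π a : ℕ) + 1 : ℕ) : ℝ) / (N : ℕ)
        = ((w b : ℕ) : ℝ) + (((π b : ℕ) + 1 : ℕ) : ℝ) / (N : ℕ) := by
      push_cast; exact hab
    obtain ⟨-, h2⟩ := key_frac hNpos (hfrac a) (hfrac b) hab2
    exact π.injective (Fin.val_injective (by omega))
  have hx'inj : Function.Injective x' := hinj x
  have hy'inj : Function.Injective y' := by rw [hy']; exact hinj y
  have hz'inj : Function.Injective z' := by rw [hz']; exact hinj z
  -- a < b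
  set a : ℝ := x' i with ha
  set b : ℝ := x' j with hb
  have hab : a < b := by
    rcases hphi with h1 | ⟨h1, h2⟩
    · have : (x i : ℝ) + 1 ≤ (x j : ℝ) := by exact_mod_cast h1
      have := hflt i; have := hfpos j
      simp only [ha, hb, hx']
      linarith
    · simp only [ha, hb, hx', h1]
      have hc1 : ((π i : ℕ) + 1 : ℝ) < ((π j : ℕ) + 1 : ℝ) := by exact_mod_cast by omega
      have hd : ((π i : ℕ) + 1 : ℝ) / (N : ℕ) < ((π j : ℕ) + 1 : ℝ) / (N : ℕ) := by
        gcongr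
      linarith
  -- the set of entries strictly below a
  set A : Finset (Fin n) := univ.filter (fun h => z' h < a) with hA
  have hzi : z' i = a := by rw [hzv i hij, ha]
  have hiA : i ∉ A := by simp [hA, hzi]
  have hjA : j ∉ A := by
    simp only [hA, mem_filter, mem_univ, true_and, not_lt, hzj]
    linarith
  set c : ℕ := A.card with hc
  have hcn : c < n := by
    have hss : A ⊂ univ := Finset.ssubset_univ_iff.mpr
      (fun h => hiA (h ▸ Finset.mem_univ i))
    have := Finset.card_lt_card hss
    simpa using this
  -- the three filter identities
  have hvals : ∀ h : Fin n, h ≠ i → h ≠ j → y' h = x' h ∧ z' h = x' h :=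
    fun h h1 h2 => ⟨hyv h h1, hzv h h2⟩
  have hxa : ∀ h : Fin n, h ≠ i → x' h ≠ a := fun h h1 he => h1 (hx'inj he)
  have filt1 : univ.filter (fun h => y' h < a) = A := by
    ext t
    simp only [hA, mem_filter, mem_univ, true_and]
    by_cases h1 : t = i
    · rw [h1, hyi, hzi]; constructor <;> intro <;> linarith
    · by_cases h2 : t = j
      · rw [h2, hyv j (h2 ▸ h1), hzj, ← hb]; constructor <;> intro <;> linarith
      · rw [hyv t h1, hzv t h2]
  have filt2 : univ.filter (fun h => y' h ≤ a) = A := by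
    ext t
    simp only [hA, mem_filter, mem_univ, true_and]
    by_cases h1 : t = i
    · rw [h1, hyi, hzi]; constructor <;> intro <;> linarith
    · by_cases h2 : t = j
      · rw [h2, hyv j (h2 ▸ h1), hzj, ← hb]; constructor <;> intro <;> linarith
      · rw [hyv t h1, hzv t h2]
        exact ⟨fun hle => lt_of_le_of_ne hle (hxa t h1), le_of_lt⟩
  have filt3 : univ.filter (fun h => z' h ≤ a) = insert i A := by
    ext t
    simp only [hA, mem_filter, mem_univ, true_and, Finset.mem_insert]
    by_cases h1 : t = i
    · rw [h1]; simp [hzi]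
    · by_cases h2 : t = j
      · rw [h2, hzj]
        constructor
        · intro hle; exact absurd hle (by linarith)
        · rintro (h3 | h3)
          · exact absurd h3.symm hij
          · linarith
      · rw [hzv t h2]
        constructor
        · intro hle; exact Or.inr (lt_of_le_of_ne hle (hxa t h1))
        · rintro (h3 | h3)
          · exact absurd h3 h1
          · exact le_of_lt h3
  have hdownlt : ∀ s t : ℝ, s ≤ t → t < a → s < a := fun s t h1 h2 => lt_of_le_of_lt h1 h2
  have hdownle : ∀ s t : ℝ, s ≤ t → t ≤ a → s ≤ a := fun s t h1 h2 => le_trans h1 h2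
  set k : Fin n := ⟨c, hcn⟩ with hk
  -- sortv z' k = a
  have hzk : sortv z' k = a := by
    have h1 : ¬ sortv z' k < a := by
      rw [sortv_count z' (· < a) hdownlt k]
      simp only [← hA, ← hc]
      show ¬ (c < A.card)
      omega
    have h2 : sortv z' k ≤ a := by
      rw [sortv_count z' (· ≤ a) hdownle k]
      rw [filt3, Finset.card_insert_of_notMem hiA, ← hc]
      simp [hk]
    exact le_antisymm h2 (not_lt.mp h1)
  -- sortv y' k > a
  have hyk : a < sortv y' k := by
    have h1 : ¬ sortv y' k ≤ a := by
      rw [sortv_count y' (· ≤ a) hdownle k]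
      rw [filt2, ← hc]
      simp [hk]
    exact not_le.mp h1
  -- strict monotonicity of the sorted vectors
  have hsy : StrictMono (sortv y') :=
    (Tuple.monotone_sort y').strictMono_of_injective
      (hy'inj.comp (Tuple.sort y').injective)
  have hsz : StrictMono (sortv z') :=
    (Tuple.monotone_sort z').strictMono_of_injective
      (hz'inj.comp (Tuple.sort z').injective)
  -- common prefix via orderEmbOfFin
  set V : Finset ℝ := A.image z' with hV
  have hVcard : V.card = c := Finset.card_image_of_injective A hz'inj
  set f : Fin c → ℝ := fun m => sortv y' ⟨m.1, m.2.trans hcn⟩ with hf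
  set g : Fin c → ℝ := fun m => sortv z' ⟨m.1, m.2.trans hcn⟩ with hg
  have hfmono : StrictMono f := fun m m' hmm => hsy (by exact hmm)
  have hgmono : StrictMono g := fun m m' hmm => hsz (by exact hmm)
  have hfV : ∀ m : Fin c, f m ∈ V := by
    intro m
    have hlt : f m < a := by
      rw [hf]
      rw [sortv_count y' (· < a) hdownlt ⟨m.1, m.2.trans hcn⟩]
      rw [filt1, ← hc]
      exact m.2
    set h : Fin n := Tuple.sort y' ⟨m.1, m.2.trans hcn⟩ with hh
    have hfm : f m = y' h := rfl
    have h1 : h ≠ i := by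
      intro he; rw [hfm, he, hyi] at hlt; linarith
    have h2 : h ≠ j := by
      intro he; rw [hfm, he, hyv j (by rintro rfl; exact hij rfl), ← hb] at hlt; linarith
    have hxm : y' h = z' h := by rw [hyv h h1, hzv h h2]
    have hmem : h ∈ A := by
      simp only [hA, mem_filter, mem_univ, true_and]
      rw [← hxm, ← hfm]; exact hlt
    rw [hfm, hxm]
    exact Finset.mem_image_of_mem z' hmem
  have hgV : ∀ m : Fin c, g m ∈ V := by
    intro m
    have hlt : g m < a := by
      rw [hg]
      rw [sortv_count z' (· < a) hdownlt ⟨m.1, m.2.trans hcn⟩]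
      rw [← hA, ← hc]
      exact m.2
    set h : Fin n := Tuple.sort z' ⟨m.1, m.2.trans hcn⟩ with hh
    have hgm : g m = z' h := rfl
    have hmem : h ∈ A := by
      simp only [hA, mem_filter, mem_univ, true_and]
      rw [← hgm]; exact hlt
    rw [hgm]
    exact Finset.mem_image_of_mem z' hmem
  have hfg : f = g := by
    rw [Finset.orderEmbOfFin_unique hVcard hfV hfmono,
      Finset.orderEmbOfFin_unique hVcard hgV hgmono]
  -- conclude
  refine ⟨k, ?_, ?_⟩
  · intro m hm
    have hmc : (m : ℕ) < c := hm
    have : f ⟨m.1, hmc⟩ = g ⟨m.1, hmc⟩ := by rw [hfg]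
    simpa [hf, hg] using this
  · rw [hzk]; exact hyk
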